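/- For unit vectors A, B, C in a real inner product space, the cosine similarity obeys the Cauchy–Schwarz-type bound: ⟨A, C⟩ · ⟨C, B⟩ − √((1 − ⟨A, C⟩²)(1 − ⟨C, B⟩²)) ≤ ⟨A, B⟩ ≤ ⟨A, C⟩ · ⟨C, B⟩ + √((1 − ⟨A, C⟩²)(1 − ⟨C, B⟩²)). -/

import Mathlib

open scoped RealInnerProductSpace

/-- Cauchy–Schwarz-type bound for the cosine similarity of unit vectors. -/
theorem inner_bounds_of_unit_vectors {V : Type*} [NormedAddCommGroup V]
    [InnerProductSpace ℝ V] (A B C : V)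
    (hA : ‖A‖ = 1) (hB : ‖B‖ = 1) (hC : ‖C‖ = 1) :
    ⟪A, C⟫ * ⟪C, B⟫ - Real.sqrt ((1 - ⟪A, C⟫ ^ 2) * (1 - ⟪C, B⟫ ^ 2)) ≤ ⟪A, B⟫ ∧
    ⟪A, B⟫ ≤ ⟪A, C⟫ * ⟪C, B⟫ + Real.sqrt ((1 - ⟪A, C⟫ ^ 2) * (1 - ⟪C, B⟫ ^ 2)) := by
  set a := ⟪A, C⟫ with ha
  set b := ⟪C, B⟫ with hb
  have hCC : ⟪C, C⟫ = 1 := by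
    rw [real_inner_self_eq_norm_sq, hC]; norm_num
  have hAA : ⟪A, A⟫ = 1 := by
    rw [real_inner_self_eq_norm_sq, hA]; norm_num
  have hBB : ⟪B, B⟫ = 1 := by
    rw [real_inner_self_eq_norm_sq, hB]; norm_num
  have hCA : ⟪C, A⟫ = a := (real_inner_comm C A).symm
  have hBC : ⟪B, C⟫ = b := (real_inner_comm B C).symm
  have key : ⟪A - a • C, B - b • C⟫ = ⟪A, B⟫ - a * b := by
    simp [inner_sub_left, inner_sub_right, real_inner_smul_left,
      real_inner_smul_right, hCC, hCA, hBC, hC]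
    ring
  have hA' : ‖A - a • C‖ ^ 2 = 1 - a ^ 2 := by
    rw [← real_inner_self_eq_norm_sq]
    simp only [inner_sub_left, inner_sub_right, real_inner_smul_left,
      real_inner_smul_right, hCC, hCA, hAA]
    ring
  have hB' : ‖B - b • C‖ ^ 2 = 1 - b ^ 2 := by
    rw [← real_inner_self_eq_norm_sq]
    simp only [inner_sub_left, inner_sub_right, real_inner_smul_left,
      real_inner_smul_right, hCC, hBC, hBB]
    ring
  have cs := abs_real_inner_le_norm (A - a • C) (B - b • C)
  have hnorm : ‖A - a • C‖ * ‖B - b • C‖ =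
      Real.sqrt ((1 - a ^ 2) * (1 - b ^ 2)) := by
    rw [Real.sqrt_mul (by rw [← hA']; positivity) _, ← hA', ← hB',
      Real.sqrt_sq (norm_nonneg _), Real.sqrt_sq (norm_nonneg _)]
  rw [key, hnorm, abs_le] at cs
  constructor <;> linarith [cs.1, cs.2]
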